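/- Let 0 < p < 1/2 (asymmetric simple random walk with downward drift). Then E(M_n^-) - (1 - 2p)·n converges to p/(1 - 2p) as n → ∞. -/

import Mathlib

open Finset Filter

/-- The value `±1` of a single step of the walk, driven by a Boolean. -/
def step (b : Bool) : ℤ := if b then 1 else -1

/-- The partial sum `S_j = X_1 + ⋯ + X_j` of the simple random walk driven by `ω`. -/
def walk {n : ℕ} (ω : Fin n → Bool) (j : ℕ) : ℤ :=
  ∑ i ∈ Finset.univ.filter fun i : Fin n => (i : ℕ) < j, step (ω i)

/-- `M_n^+ = max_{0 ≤ j ≤ n} S_j`. -/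
def mplus {n : ℕ} (ω : Fin n → Bool) : ℤ :=
  (Finset.range (n + 1)).sup' (by simp) (walk ω)

/-- `M_n^- = -min_{0 ≤ j ≤ n} S_j`. -/
def mminus {n : ℕ} (ω : Fin n → Bool) : ℤ :=
  -((Finset.range (n + 1)).inf' (by simp) (walk ω))

/-- The probability weight of the path `ω` when `P{Xᵢ = 1} = p`, `P{Xᵢ = -1} = 1 - p`,
independently over `i`. -/
def wt (p : ℝ) {n : ℕ} (ω : Fin n → Bool) : ℝ :=
  ∏ i, if ω i then p else 1 - p

/-- The probability of an event `A` for a walk of length `n`. -/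
noncomputable def prob (p : ℝ) {n : ℕ} (A : Set (Fin n → Bool)) : ℝ :=
  ∑ ω : Fin n → Bool, A.indicator (wt p) ω

/-- The expectation of a functional `f` of a walk of length `n`. -/
noncomputable def expectation (p : ℝ) {n : ℕ} (f : (Fin n → Bool) → ℝ) : ℝ :=
  ∑ ω : Fin n → Bool, wt p ω * f ω

lemma walk_eq {n : ℕ} (ω : Fin n → Bool) (j : ℕ) :
    walk ω j = ∑ i : Fin n, if (i : ℕ) < j then step (ω i) else 0 := by
  rw [walk, Finset.sum_filter]

lemma walk_zero {n : ℕ} (ω : Fin n → Bool) : walk ω 0 = 0 := by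
  simp [walk_eq]

lemma walk_cons {n : ℕ} (b : Bool) (ω : Fin n → Bool) (j : ℕ) :
    walk (Fin.cons b ω) (j + 1) = step b + walk ω j := by
  rw [walk_eq, Fin.sum_univ_succ]
  simp [walk_eq, Fin.cons_succ, Nat.succ_lt_succ_iff]

lemma sum_cons {n : ℕ} (F : (Fin (n + 1) → Bool) → ℝ) :
    ∑ ω : Fin (n + 1) → Bool, F ω
      = ∑ b : Bool, ∑ ω : Fin n → Bool, F (Fin.cons b ω) := by
  rw [← Equiv.sum_comp (Fin.consEquiv fun _ : Fin (n+1) => Bool)]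
  rw [Fintype.sum_prod_type]
  rfl

lemma wt_cons (p : ℝ) {n : ℕ} (b : Bool) (ω : Fin n → Bool) :
    wt p (Fin.cons b ω) = (if b then p else 1 - p) * wt p ω := by
  rw [wt, Fin.prod_univ_succ]
  simp [wt, Fin.cons_succ]

lemma sum_wt (p : ℝ) (n : ℕ) : ∑ ω : Fin n → Bool, wt p ω = 1 := by
  induction n with
  | zero => simp [wt]
  | succ n ih =>
    rw [sum_cons]
    simp only [wt_cons, ← Finset.mul_sum, ih, mul_one, Fintype.sum_bool]
    norm_num

-- splitting of sup' over range (n+2) at the bottom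
lemma sup'_range_succ (f : ℕ → ℤ) (n : ℕ) :
    (Finset.range (n + 2)).sup' (by simp) f
      = max (f 0) ((Finset.range (n + 1)).sup' (by simp) (fun k => f (k + 1))) := by
  apply le_antisymm
  · apply Finset.sup'_le
    intro j hj
    rcases j with _ | k
    · exact le_max_left _ _
    · refine le_trans ?_ (le_max_right _ _)
      exact Finset.le_sup' (f := fun k => f (k + 1)) (by simpa using Nat.lt_of_succ_lt_succ (Finset.mem_range.mp hj))
  · apply max_le
    · exact Finset.le_sup' f (by simp : 0 ∈ Finset.range (n + 2))
    · apply Finset.sup'_le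
      intro k hk
      exact Finset.le_sup' f (by simpa [Nat.succ_lt_succ_iff] using Finset.mem_range.mp hk)

lemma mplus_cons {n : ℕ} (b : Bool) (ω : Fin n → Bool) :
    mplus (Fin.cons b ω) = max 0 (step b + mplus ω) := by
  rw [mplus, sup'_range_succ]
  congr 1
  · exact walk_zero _
  · rw [mplus]
    have : (fun k => walk (Fin.cons b ω) (k + 1)) = fun k => step b + walk ω k := by
      funext k; exact walk_cons b ω k
    rw [this]
    exact (Finset.add_sup' _ _ _ _).symm

lemma mplus_nonneg {n : ℕ} (ω : Fin n → Bool) : 0 ≤ mplus ω := by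
  rw [mplus]
  refine le_trans (le_of_eq (walk_zero ω).symm) (Finset.le_sup' _ (by simp))

lemma mplus_le {n : ℕ} (ω : Fin n → Bool) : mplus ω ≤ n := by
  rw [mplus]
  apply Finset.sup'_le
  intro j hj
  calc walk ω j ≤ ∑ i : Fin n, if (i : ℕ) < j then 1 else 0 := by
        rw [walk_eq]
        apply Finset.sum_le_sum
        intro i _
        split
        · rcases ω i with _ | _ <;> simp [step]
        · exact le_refl _
      _ ≤ ∑ _i : Fin n, (1 : ℤ) := by
        apply Finset.sum_le_sum; intro i _; split <;> simp
      _ = n := by simp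

noncomputable def u (p : ℝ) (n k : ℕ) : ℝ :=
  ∑ ω : Fin n → Bool, wt p ω * (if (k : ℤ) ≤ mplus ω then 1 else 0)

lemma u_zero (p : ℝ) (n : ℕ) : u p n 0 = 1 := by
  rw [u]
  have : ∀ ω : Fin n → Bool, (if ((0:ℕ) : ℤ) ≤ mplus ω then (1:ℝ) else 0) = 1 := by
    intro ω; rw [if_pos]; exact_mod_cast mplus_nonneg ω
  simp only [this, mul_one, sum_wt]

lemma u_nil (p : ℝ) (k : ℕ) : u p 0 (k + 1) = 0 := by
  rw [u]
  apply Finset.sum_eq_zero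
  intro ω _
  have h0 : mplus ω = 0 := le_antisymm (by simpa using mplus_le ω) (mplus_nonneg ω)
  rw [h0, if_neg (by push_cast; omega), mul_zero]

lemma u_rec (p : ℝ) (n k : ℕ) :
    u p (n + 1) (k + 1) = p * u p n k + (1 - p) * u p n (k + 2) := by
  rw [u, sum_cons, Fintype.sum_bool]
  have ht : ∀ ω : Fin n → Bool,
      wt p (Fin.cons true ω) * (if ((k + 1 : ℕ) : ℤ) ≤ mplus (Fin.cons true ω) then (1:ℝ) else 0)
        = p * (wt p ω * (if ((k : ℕ) : ℤ) ≤ mplus ω then (1:ℝ) else 0)) := by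
    intro ω
    rw [wt_cons, mplus_cons]
    have h := mplus_nonneg ω
    have hs : step true = 1 := rfl
    rw [hs, max_eq_right (by omega)]
    have hiff : (((k + 1 : ℕ) : ℤ) ≤ 1 + mplus ω) ↔ (((k : ℕ) : ℤ) ≤ mplus ω) := by
      push_cast; omega
    rw [if_congr hiff rfl rfl]
    simp only [if_true]
    ring
  have hf : ∀ ω : Fin n → Bool,
      wt p (Fin.cons false ω) * (if ((k + 1 : ℕ) : ℤ) ≤ mplus (Fin.cons false ω) then (1:ℝ) else 0)
        = (1 - p) * (wt p ω * (if ((k + 2 : ℕ) : ℤ) ≤ mplus ω then (1:ℝ) else 0)) := by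
    intro ω
    rw [wt_cons, mplus_cons]
    have h := mplus_nonneg ω
    have hs : step false = -1 := rfl
    rw [hs]
    have hiff : (((k + 1 : ℕ) : ℤ) ≤ max 0 (-1 + mplus ω)) ↔ (((k + 2 : ℕ) : ℤ) ≤ mplus ω) := by
      rw [le_max_iff]; push_cast; omega
    rw [if_congr hiff rfl rfl]
    simp only [Bool.false_eq_true, if_false]
    ring
  simp only [ht, hf, ← Finset.mul_sum]
  rw [← u, ← u]

section analysis

variable {p : ℝ} (hp0 : 0 < p) (hp1 : p < 1/2)

lemma wt_nonneg (hp0 : 0 < p) (hp1 : p < 1/2) {n : ℕ} (ω : Fin n → Bool) : 0 ≤ wt p ω := by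
  apply Finset.prod_nonneg
  intro i _
  split <;> linarith

lemma u_nonneg (hp0 : 0 < p) (hp1 : p < 1/2) (n k : ℕ) : 0 ≤ u p n k := by
  apply Finset.sum_nonneg
  intro ω _
  apply mul_nonneg (wt_nonneg hp0 hp1 ω)
  split <;> norm_num

lemma u_le (hp0 : 0 < p) (hp1 : p < 1/2) (n k : ℕ) : u p n k ≤ (p / (1 - p)) ^ k := by
  have hq : 0 < 1 - p := by linarith
  have hr0 : 0 ≤ p / (1 - p) := by positivity
  induction n generalizing k with
  | zero =>
    rcases k with _ | k
    · rw [u_zero]; norm_num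
    · rw [u_nil]; positivity
  | succ n ih =>
    rcases k with _ | k
    · rw [u_zero]; norm_num
    · rw [u_rec]
      have key : p * (p / (1 - p)) ^ k + (1 - p) * (p / (1 - p)) ^ (k + 2)
          = (p / (1 - p)) ^ (k + 1) := by
        rw [pow_succ, pow_add]
        field_simp
        ring
      calc p * u p n k + (1 - p) * u p n (k + 2)
          ≤ p * (p / (1 - p)) ^ k + (1 - p) * (p / (1 - p)) ^ (k + 2) := by
            apply add_le_add
            · exact mul_le_mul_of_nonneg_left (ih k) (le_of_lt hp0)
            · exact mul_le_mul_of_nonneg_left (ih (k + 2)) (le_of_lt hq)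
        _ = (p / (1 - p)) ^ (k + 1) := key

lemma u_mono (hp0 : 0 < p) (hp1 : p < 1/2) (n k : ℕ) : u p n k ≤ u p (n + 1) k := by
  induction n generalizing k with
  | zero =>
    rcases k with _ | k
    · rw [u_zero, u_zero]
    · rw [u_nil]; exact u_nonneg hp0 hp1 _ _
  | succ n ih =>
    rcases k with _ | k
    · rw [u_zero, u_zero]
    · rw [u_rec, u_rec]
      apply add_le_add
      · exact mul_le_mul_of_nonneg_left (ih k) (le_of_lt hp0)
      · exact mul_le_mul_of_nonneg_left (ih (k + 2)) (by linarith)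

noncomputable def L (p : ℝ) (k : ℕ) : ℝ := ⨆ n, u p n k

lemma u_bddAbove (hp0 : 0 < p) (hp1 : p < 1/2) (k : ℕ) :
    BddAbove (Set.range fun n => u p n k) := by
  refine ⟨(p / (1 - p)) ^ k, ?_⟩
  rintro x ⟨n, rfl⟩
  exact u_le hp0 hp1 n k

lemma u_tendsto (hp0 : 0 < p) (hp1 : p < 1/2) (k : ℕ) :
    Tendsto (fun n => u p n k) atTop (nhds (L p k)) :=
  tendsto_atTop_ciSup (monotone_nat_of_le_succ fun n => u_mono hp0 hp1 n k)
    (u_bddAbove hp0 hp1 k)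

lemma L_zero (hp0 : 0 < p) (hp1 : p < 1/2) : L p 0 = 1 := by
  have := u_tendsto hp0 hp1 0
  have h2 : Tendsto (fun _ : ℕ => (1:ℝ)) atTop (nhds (L p 0)) := by
    simpa [u_zero] using this
  exact tendsto_nhds_unique h2 tendsto_const_nhds

lemma L_le (hp0 : 0 < p) (hp1 : p < 1/2) (k : ℕ) : L p k ≤ (p / (1 - p)) ^ k :=
  ciSup_le fun n => u_le hp0 hp1 n k

lemma L_nonneg (hp0 : 0 < p) (hp1 : p < 1/2) (k : ℕ) : 0 ≤ L p k :=
  le_trans (u_nonneg hp0 hp1 0 k) (le_ciSup (u_bddAbove hp0 hp1 k) 0)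

lemma L_rec (hp0 : 0 < p) (hp1 : p < 1/2) (k : ℕ) :
    L p (k + 1) = p * L p k + (1 - p) * L p (k + 2) := by
  have h1 : Tendsto (fun n => u p (n + 1) (k + 1)) atTop (nhds (L p (k + 1))) :=
    (u_tendsto hp0 hp1 (k + 1)).comp (tendsto_add_atTop_nat 1)
  have h2 : Tendsto (fun n => p * u p n k + (1 - p) * u p n (k + 2)) atTop
      (nhds (p * L p k + (1 - p) * L p (k + 2))) :=
    ((u_tendsto hp0 hp1 k).const_mul p).add ((u_tendsto hp0 hp1 (k + 2)).const_mul (1 - p))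
  have : (fun n => u p (n + 1) (k + 1)) = fun n => p * u p n k + (1 - p) * u p n (k + 2) := by
    funext n; exact u_rec p n k
  rw [this] at h1
  exact tendsto_nhds_unique h1 h2

lemma pow_id (hp0 : 0 < p) (hp1 : p < 1/2) (k : ℕ) :
    (p / (1 - p)) ^ (k + 1) = p * (p / (1 - p)) ^ k + (1 - p) * (p / (1 - p)) ^ (k + 2) := by
  have hq : (1 - p) ≠ 0 := by intro h; rw [sub_eq_zero] at h; rw [← h] at hp1; norm_num at hp1
  rw [pow_succ, pow_add]
  field_simp
  ring

lemma L_eq (hp0 : 0 < p) (hp1 : p < 1/2) (k : ℕ) : L p k = (p / (1 - p)) ^ k := by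
  have hq : (0:ℝ) < 1 - p := by linarith
  obtain ⟨r, hr⟩ : ∃ r : ℝ, r = p / (1 - p) := ⟨_, rfl⟩
  have hr0 : 0 ≤ r := by rw [hr]; positivity
  have hr1 : r < 1 := by rw [hr, div_lt_one hq]; linarith
  have hrq : (1 - p) * r = p := by rw [hr]; field_simp
  suffices h : L p k = r ^ k by rw [h, hr]
  obtain ⟨a, haK⟩ : ∃ a : ℕ → ℝ, ∀ k, a k = L p k - r ^ k := ⟨_, fun _ => rfl⟩
  have ha0 : a 0 = 0 := by rw [haK, L_zero hp0 hp1]; norm_num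
  have hpow : ∀ k : ℕ, r ^ (k + 1) = p * r ^ k + (1 - p) * r ^ (k + 2) := by
    intro k
    linear_combination (r ^ k * (1 - r)) * hrq
  have ha_rec : ∀ k, a (k + 1) = p * a k + (1 - p) * a (k + 2) := by
    intro k
    have h1 := L_rec hp0 hp1 k
    have h2 := hpow k
    rw [haK, haK, haK]
    linear_combination h1 - h2
  obtain ⟨d, hdK⟩ : ∃ d : ℕ → ℝ, ∀ k, d k = a (k + 1) - a k := ⟨_, fun _ => rfl⟩
  have hd_rec : ∀ k, d (k + 1) = r * d k := by
    intro k
    have h := ha_rec k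
    have h2 : (1 - p) * d (k + 1) = p * d k := by
      rw [hdK, hdK]
      linear_combination -h
    have h3 : (1 - p) * (r * d k) = p * d k := by
      linear_combination (d k) * hrq
    have := mul_left_cancel₀ (ne_of_gt hq) (h2.trans h3.symm)
    linarith [this]
  have hd_pow : ∀ k, d k = r ^ k * d 0 := by
    intro k
    induction k with
    | zero => simp
    | succ k ih => rw [hd_rec, ih, pow_succ]; ring
  have ha_sum : ∀ k, a k = d 0 * ∑ j ∈ Finset.range k, r ^ j := by
    intro k
    induction k with
    | zero => simp [ha0]
    | succ k ih =>
      have h1 : a (k + 1) = a k + d k := by rw [hdK]; ring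
      rw [h1, ih, hd_pow k, Finset.sum_range_succ]
      ring
  have ha_nonpos : ∀ k, a k ≤ 0 := fun k => by
    rw [haK]
    have := L_le hp0 hp1 k
    rw [← hr] at this
    linarith
  have ha_lb : ∀ k, -r ^ k ≤ a k := fun k => by
    have := L_nonneg hp0 hp1 k
    rw [haK]
    linarith
  have hd0_nonpos : d 0 ≤ 0 := by
    have h1 := ha_nonpos 1
    have h2 := hdK 0
    rw [ha0] at h2
    linarith
  have hd0_nonneg : 0 ≤ d 0 := by
    by_contra hneg
    push_neg at hneg
    have hpow' : Tendsto (fun k : ℕ => r ^ k) atTop (nhds 0) :=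
      tendsto_pow_atTop_nhds_zero_of_lt_one hr0 hr1
    have hev : ∀ᶠ k : ℕ in atTop, r ^ k < -d 0 := by
      have h0 : (0:ℝ) < -d 0 := by linarith
      exact (hpow'.eventually (eventually_lt_nhds h0)).mono (fun k hk => by simpa using hk)
    obtain ⟨k, hk⟩ := (hev.and (eventually_ge_atTop 1)).exists
    have hS : (1:ℝ) ≤ ∑ j ∈ Finset.range k, r ^ j := by
      calc (1:ℝ) = r ^ 0 := by norm_num
        _ ≤ ∑ j ∈ Finset.range k, r ^ j := by
          apply Finset.single_le_sum (f := fun j => r ^ j)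
          · intro i _; positivity
          · exact Finset.mem_range.mpr hk.2
    have hak : a k ≤ d 0 := by
      rw [ha_sum]
      nlinarith
    have h5 := ha_lb k
    have h6 := hk.1
    linarith
  have hd0 : d 0 = 0 := le_antisymm hd0_nonpos hd0_nonneg
  have h7 := ha_sum k
  rw [hd0, zero_mul] at h7
  have h8 := haK k
  rw [h7] at h8
  linarith

end analysis

lemma ind_sum (m : ℤ) (n : ℕ) (h0 : 0 ≤ m) (hn : m ≤ n) :
    ∑ k ∈ Finset.range n, (if ((k + 1 : ℕ) : ℤ) ≤ m then (1:ℝ) else 0) = m := by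
  rw [Finset.sum_boole]
  have hf : (Finset.range n).filter (fun k => ((k + 1 : ℕ) : ℤ) ≤ m) = Finset.range m.toNat := by
    ext k
    simp only [Finset.mem_filter, Finset.mem_range]
    omega
  rw [hf, Finset.card_range]
  exact_mod_cast congrArg (fun z : ℤ => (z : ℝ)) (Int.toNat_of_nonneg h0)

lemma exp_mplus (p : ℝ) (n : ℕ) :
    expectation p (fun ω : Fin n → Bool => (mplus ω : ℝ)) = ∑ k ∈ Finset.range n, u p n (k + 1) := by
  rw [expectation]
  have key : ∀ ω : Fin n → Bool, ((mplus ω : ℤ) : ℝ)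
      = ∑ k ∈ Finset.range n, (if ((k + 1 : ℕ) : ℤ) ≤ mplus ω then (1:ℝ) else 0) :=
    fun ω => (ind_sum _ _ (mplus_nonneg ω) (mplus_le ω)).symm
  simp only [key, Finset.mul_sum]
  rw [Finset.sum_comm]
  rfl

lemma walk_rev {n : ℕ} (ω : Fin n → Bool) (k : ℕ) (hk : k ≤ n) :
    walk (ω ∘ Fin.rev) k = walk ω n - walk ω (n - k) := by
  have h1 : walk (ω ∘ Fin.rev) k
      = ∑ i : Fin n, if ((Fin.rev i : Fin n) : ℕ) < k then step (ω i) else 0 := by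
    rw [walk_eq]
    rw [← Equiv.sum_comp (Fin.revPerm : Equiv.Perm (Fin n))
      (fun i => if ((Fin.rev i : Fin n) : ℕ) < k then step (ω i) else 0)]
    apply Finset.sum_congr rfl
    intro i _
    simp [Fin.rev_rev, Function.comp]
  rw [h1, walk_eq, walk_eq, ← Finset.sum_sub_distrib]
  apply Finset.sum_congr rfl
  intro i _
  have hi : (i : ℕ) < n := i.isLt
  have hrev : ((Fin.rev i : Fin n) : ℕ) = n - 1 - i := by
    rw [Fin.val_rev]; omega
  rw [hrev]
  simp only [hi, if_true]
  split_ifs with ha hb hc <;> try ring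
  · exfalso; omega
  · exfalso; omega

lemma sup'_sub_const {s : Finset ℕ} (h : s.Nonempty) (f : ℕ → ℤ) (c : ℤ) :
    s.sup' h (fun k => c - f k) = c - s.inf' h f := by
  apply le_antisymm
  · apply Finset.sup'_le
    intro k hk
    have := Finset.inf'_le f hk
    omega
  · obtain ⟨i, hi, hie⟩ := Finset.exists_mem_eq_inf' h f
    rw [hie]
    exact Finset.le_sup' (fun k => c - f k) hi

lemma inf'_range_reflect (f : ℕ → ℤ) (n : ℕ) :
    (Finset.range (n + 1)).inf' (by simp) (fun k => f (n - k))
      = (Finset.range (n + 1)).inf' (by simp) f := by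
  apply le_antisymm
  · apply Finset.le_inf'
    intro j hj
    have hj' : j ≤ n := by simpa [Nat.lt_succ_iff] using hj
    have : n - (n - j) = j := by omega
    calc (Finset.range (n + 1)).inf' (by simp) (fun k => f (n - k)) ≤ f (n - (n - j)) :=
          Finset.inf'_le _ (by rw [Finset.mem_range]; omega)
      _ = f j := by rw [this]
  · apply Finset.le_inf'
    intro j hj
    have hj' : j ≤ n := by simpa [Nat.lt_succ_iff] using hj
    exact Finset.inf'_le f (by rw [Finset.mem_range]; omega)

lemma mplus_rev {n : ℕ} (ω : Fin n → Bool) :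
    mplus (ω ∘ Fin.rev) = walk ω n + mminus ω := by
  rw [mplus, mminus]
  have hcong : ∀ k ∈ Finset.range (n + 1),
      walk (ω ∘ Fin.rev) k = walk ω n - walk ω (n - k) := by
    intro k hk
    exact walk_rev ω k (by simpa [Nat.lt_succ_iff] using hk)
  rw [Finset.sup'_congr (by simp : (Finset.range (n+1)).Nonempty) rfl hcong]
  rw [sup'_sub_const (by simp) (fun k => walk ω (n - k)) (walk ω n)]
  rw [inf'_range_reflect (walk ω) n]
  ring

lemma wt_rev (p : ℝ) {n : ℕ} (ω : Fin n → Bool) : wt p (ω ∘ Fin.rev) = wt p ω := by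
  rw [wt, wt]
  rw [← Equiv.prod_comp (Fin.revPerm : Equiv.Perm (Fin n))
    (fun i => if ω i then p else 1 - p)]
  rfl

lemma exp_walk (p : ℝ) (n : ℕ) :
    ∑ ω : Fin n → Bool, wt p ω * ((walk ω n : ℤ) : ℝ) = n * (2 * p - 1) := by
  induction n with
  | zero => simp [wt, walk_zero]
  | succ n ih =>
    rw [sum_cons, Fintype.sum_bool]
    have keyT : ∀ ω : Fin n → Bool,
        wt p (Fin.cons true ω) * ((walk (Fin.cons true ω) (n + 1) : ℤ) : ℝ)
          = p * (wt p ω * (1 + ((walk ω n : ℤ) : ℝ))) := by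
      intro ω
      rw [wt_cons, walk_cons]
      have : step true = 1 := rfl
      rw [this]
      push_cast
      simp only [if_true]
      ring
    have keyF : ∀ ω : Fin n → Bool,
        wt p (Fin.cons false ω) * ((walk (Fin.cons false ω) (n + 1) : ℤ) : ℝ)
          = (1 - p) * (wt p ω * (-1 + ((walk ω n : ℤ) : ℝ))) := by
      intro ω
      rw [wt_cons, walk_cons]
      have : step false = -1 := rfl
      rw [this]
      push_cast
      norm_num
      ring
    simp only [keyT, keyF]
    rw [← Finset.sum_add_distrib]
    have key2 : ∀ ω : Fin n → Bool,
        p * (wt p ω * (1 + ((walk ω n : ℤ) : ℝ))) + (1 - p) * (wt p ω * (-1 + ((walk ω n : ℤ) : ℝ)))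
          = (2 * p - 1) * wt p ω + wt p ω * ((walk ω n : ℤ) : ℝ) := by
      intro ω; ring
    simp only [key2]
    rw [Finset.sum_add_distrib, ← Finset.mul_sum, sum_wt, ih]
    push_cast
    ring

lemma exp_mminus (p : ℝ) (n : ℕ) :
    expectation p (fun ω : Fin n → Bool => (mminus ω : ℝ))
      = expectation p (fun ω : Fin n → Bool => (mplus ω : ℝ)) + (1 - 2 * p) * n := by
  have hmm : ∀ ω : Fin n → Bool, ((mminus ω : ℤ) : ℝ)
      = ((mplus (ω ∘ Fin.rev) : ℤ) : ℝ) - ((walk ω n : ℤ) : ℝ) := by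
    intro ω
    have h := mplus_rev ω
    have : (mminus ω : ℤ) = mplus (ω ∘ Fin.rev) - walk ω n := by omega
    exact_mod_cast congrArg (fun z : ℤ => (z : ℝ)) this
  rw [expectation]
  simp only [hmm, mul_sub]
  rw [Finset.sum_sub_distrib, exp_walk]
  have hbij : Function.Bijective (fun ω : Fin n → Bool => ω ∘ Fin.rev) :=
    Function.Involutive.bijective (fun ω => by
      funext i; simp [Function.comp, Fin.rev_rev])
  have hsum : ∑ ω : Fin n → Bool, wt p ω * ((mplus (ω ∘ Fin.rev) : ℤ) : ℝ)
      = ∑ ω : Fin n → Bool, wt p ω * ((mplus ω : ℤ) : ℝ) := by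
    apply Fintype.sum_bijective _ hbij
    intro ω
    rw [wt_rev]
  rw [hsum, expectation]
  ring

theorem statement7 (p : ℝ) (hp0 : 0 < p) (hp1 : p < 1/2) :
    Tendsto
      (fun n : ℕ =>
        expectation p (fun ω : Fin n → Bool => (mminus ω : ℝ)) - (1 - 2 * p) * n)
      atTop (nhds (p / (1 - 2 * p))) := by
  have hfe : (fun n : ℕ =>
        expectation p (fun ω : Fin n → Bool => (mminus ω : ℝ)) - (1 - 2 * p) * n)
      = fun n : ℕ => ∑ k ∈ Finset.range n, u p n (k + 1) := by
    funext n
    rw [exp_mminus, exp_mplus]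
    ring
  rw [hfe]
  have hq : (0:ℝ) < 1 - p := by linarith
  obtain ⟨r, hr⟩ : ∃ r : ℝ, r = p / (1 - p) := ⟨_, rfl⟩
  have hr0 : 0 ≤ r := by rw [hr]; positivity
  have hr1 : r < 1 := by rw [hr, div_lt_one hq]; linarith
  have hS : p / (1 - 2 * p) = r * (1 - r)⁻¹ := by
    have h2 : (1 - 2 * p) ≠ 0 := by intro h; linarith [h]
    have h3 : (1 - p) ≠ 0 := ne_of_gt hq
    have h5 : 1 - r = (1 - 2 * p) / (1 - p) := by
      rw [hr]
      field_simp
      ring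
    rw [h5, hr, inv_div, div_mul_div_comm]
    rw [div_eq_div_iff h2 (mul_ne_zero h3 h2)]
    ring
  have hLr : ∀ k : ℕ, L p k = r ^ k := by
    intro k; rw [L_eq hp0 hp1 k, hr]
  set f : ℕ → ℝ := fun n => ∑ k ∈ Finset.range n, u p n (k + 1) with hf
  have hsummable := summable_geometric_of_lt_one hr0 hr1
  have hps : ∀ n : ℕ, ∑ k ∈ Finset.range n, r ^ k ≤ (1 - r)⁻¹ := by
    intro n
    rw [← tsum_geometric_of_lt_one hr0 hr1]
    exact Summable.sum_le_tsum _ (fun i _ => by positivity) hsummable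
  have hfS : ∀ n, f n ≤ p / (1 - 2 * p) := by
    intro n
    rw [hS]
    calc f n ≤ ∑ k ∈ Finset.range n, r ^ (k + 1) := by
          apply Finset.sum_le_sum
          intro k _
          rw [hr]
          exact u_le hp0 hp1 n (k + 1)
      _ = r * ∑ k ∈ Finset.range n, r ^ k := by
          rw [Finset.mul_sum]
          apply Finset.sum_congr rfl
          intro k _
          ring
      _ ≤ r * (1 - r)⁻¹ := by
          apply mul_le_mul_of_nonneg_left (hps n) hr0
  have hmono : Monotone f := by
    apply monotone_nat_of_le_succ
    intro n
    rw [hf]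
    simp only
    rw [Finset.sum_range_succ]
    have h1 : ∑ k ∈ Finset.range n, u p n (k + 1) ≤ ∑ k ∈ Finset.range n, u p (n + 1) (k + 1) :=
      Finset.sum_le_sum fun k _ => u_mono hp0 hp1 n (k + 1)
    have h2 : 0 ≤ u p (n + 1) (n + 1) := u_nonneg hp0 hp1 _ _
    linarith
  have hbdd : BddAbove (Set.range f) := by
    refine ⟨p / (1 - 2 * p), ?_⟩
    rintro x ⟨n, rfl⟩
    exact hfS n
  have htend : Tendsto f atTop (nhds (⨆ n, f n)) := tendsto_atTop_ciSup hmono hbdd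
  have hsup : (⨆ n, f n) = p / (1 - 2 * p) := by
    apply le_antisymm
    · exact ciSup_le hfS
    · have hpartial : ∀ K : ℕ, (∑ k ∈ Finset.range K, r ^ (k + 1)) ≤ ⨆ n, f n := by
        intro K
        have h1 : Tendsto (fun n => ∑ k ∈ Finset.range K, u p n (k + 1)) atTop
            (nhds (∑ k ∈ Finset.range K, r ^ (k + 1))) := by
          apply tendsto_finset_sum
          intro k _
          have := u_tendsto hp0 hp1 (k + 1)
          rwa [hLr (k + 1)] at this
        apply le_of_tendsto h1
        filter_upwards [eventually_ge_atTop K] with n hn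
        calc ∑ k ∈ Finset.range K, u p n (k + 1) ≤ f n := by
              apply Finset.sum_le_sum_of_subset_of_nonneg
              · exact Finset.range_subset_range.mpr hn
              · intro k _ _
                exact u_nonneg hp0 hp1 n (k + 1)
          _ ≤ ⨆ n, f n := le_ciSup hbdd n
      have h3 : Tendsto (fun K : ℕ => ∑ k ∈ Finset.range K, r ^ (k + 1)) atTop
          (nhds (p / (1 - 2 * p))) := by
        have hgeo : Tendsto (fun K : ℕ => ∑ k ∈ Finset.range K, r ^ k) atTop
            (nhds ((1 - r)⁻¹)) :=
          (hasSum_geometric_of_lt_one hr0 hr1).tendsto_sum_nat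
        have : (fun K : ℕ => ∑ k ∈ Finset.range K, r ^ (k + 1))
            = fun K : ℕ => r * ∑ k ∈ Finset.range K, r ^ k := by
          funext K
          rw [Finset.mul_sum]
          apply Finset.sum_congr rfl
          intro k _
          ring
        rw [this, hS]
        exact hgeo.const_mul r
      exact le_of_tendsto h3 (Eventually.of_forall hpartial)
  rwa [hsup] at htend
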